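/- (Lower-bound step from Appendix E.) In the CBwK setting, let b ∈ (0, min B) and assume the problem (r,c,B',ν) is feasible for some B' < B − b·1. Then for any minimizer λ*_B of λ ↦ L(λ,B) over λ ∈ [0,∞)^d, one has OPT(r,c,B) − OPT(r,c,B−b·1) ≥ b·‖λ*_B‖₁ ≥ b·‖λ*_B‖, where ‖·‖₁ is the ℓ1-norm and ‖·‖ the Euclidean norm. -/

import Mathlib

set_option linter.unusedSectionVars false

open MeasureTheory Finset

namespace CBwK

variable {X : Type*} [MeasurableSpace X] {A : Type*} [Fintype A] [Nonempty A] {d : ℕ}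

/-- A static policy: a measurable map `X → P(A)` with components `(π_a)_{a∈A}`. -/
def IsPolicy (π : X → A → ℝ) : Prop :=
  (∀ x a, 0 ≤ π x a) ∧ (∀ x, ∑ a, π x a = 1) ∧ (∀ a, Measurable fun x => π x a)

/-- Expected reward `E_{X∼ν}[Σ_a r(X,a) π_a(X)]` of a policy. -/
noncomputable def polReward (ν : Measure X) (r : X → A → ℝ) (π : X → A → ℝ) : ℝ :=
  ∫ x, ∑ a, r x a * π x a ∂ν

/-- Component `i` of the expected cost vector `E_{X∼ν}[Σ_a c(X,a) π_a(X)]` of a policy. -/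
noncomputable def polCost (ν : Measure X) (c : X → A → Fin d → ℝ) (π : X → A → ℝ)
    (i : Fin d) : ℝ :=
  ∫ x, ∑ a, c x a i * π x a ∂ν

/-- The problem `(r,c,B',ν)` is feasible. -/
def Feasible (ν : Measure X) (c : X → A → Fin d → ℝ) (B' : Fin d → ℝ) : Prop :=
  ∃ π, IsPolicy π ∧ ∀ i, polCost ν c π i ≤ B' i

/-- `OPT(r,c,B')`: optimal expected reward under the expected-cost constraints `B'`. -/
noncomputable def OPT (ν : Measure X) (r : X → A → ℝ) (c : X → A → Fin d → ℝ)
    (B' : Fin d → ℝ) : ℝ :=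
  sSup {y : ℝ | ∃ π, IsPolicy π ∧ (∀ i, polCost ν c π i ≤ B' i) ∧ y = polReward ν r π}

/-- `L(λ,C) = E_{X∼ν}[ max_a { r(X,a) − ⟨c(X,a) − C, λ⟩ } ]`. -/
noncomputable def L (ν : Measure X) (r : X → A → ℝ) (c : X → A → Fin d → ℝ)
    (lam : Fin d → ℝ) (C : Fin d → ℝ) : ℝ :=
  ∫ x, Finset.univ.sup' Finset.univ_nonempty
    (fun a => r x a - ∑ i, (c x a i - C i) * lam i) ∂ν

/-- Euclidean norm on `ℝ^d`. -/
noncomputable def enorm (v : Fin d → ℝ) : ℝ := Real.sqrt (∑ i, (v i) ^ 2)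

/-- ℓ1-norm on `ℝ^d`. -/
noncomputable def l1norm (v : Fin d → ℝ) : ℝ := ∑ i, |v i|

/-- Smallest component of a vector of `ℝ^d` (junk value `0` if `d = 0`). -/
noncomputable def minComp (v : Fin d → ℝ) : ℝ := ⨅ i, v i

/-! ### Auxiliary lemmas -/

/-- Pointwise Lagrangian max. -/
noncomputable def Mfun (r : X → A → ℝ) (c : X → A → Fin d → ℝ) (lam C : Fin d → ℝ)
    (x : X) : ℝ :=
  Finset.univ.sup' Finset.univ_nonempty (fun a => r x a - ∑ i, (c x a i - C i) * lam i)

lemma L_eq (ν : Measure X) (r : X → A → ℝ) (c : X → A → Fin d → ℝ) (lam C : Fin d → ℝ) :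
    L ν r c lam C = ∫ x, Mfun r c lam C x ∂ν := rfl

section WithMeasure

variable {ν : Measure X} [IsProbabilityMeasure ν]
  {r : X → A → ℝ} {c : X → A → Fin d → ℝ}

lemma integrable_of_bdd {f : X → ℝ} (hm : Measurable f) {C : ℝ} (hb : ∀ x, |f x| ≤ C) :
    Integrable f ν :=
  ⟨hm.aestronglyMeasurable, HasFiniteIntegral.of_bounded (C := C)
    (Filter.Eventually.of_forall fun x => by simpa [Real.norm_eq_abs] using hb x)⟩

lemma policy_le_one {π : X → A → ℝ} (hπ : IsPolicy π) (x : X) (a : A) : π x a ≤ 1 := by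
  calc π x a ≤ ∑ a', π x a' :=
        Finset.single_le_sum (fun a' _ => hπ.1 x a') (Finset.mem_univ a)
    _ = 1 := hπ.2.1 x

lemma integrable_polPair {π : X → A → ℝ} (hπ : IsPolicy π) {φ : X → A → ℝ}
    (hm : ∀ a, Measurable fun x => φ x a) {K : ℝ} (hbd : ∀ x a, |φ x a| ≤ K) :
    Integrable (fun x => ∑ a, φ x a * π x a) ν := by
  have hmeas : Measurable fun x => ∑ a, φ x a * π x a :=
    Finset.measurable_sum _ fun a _ => (hm a).mul (hπ.2.2 a)
  refine integrable_of_bdd hmeas (C := (Fintype.card A : ℝ) * K) fun x => ?_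
  have hK : 0 ≤ K := le_trans (abs_nonneg _) (hbd x (Classical.arbitrary A))
  calc |∑ a, φ x a * π x a| ≤ ∑ a, |φ x a * π x a| := Finset.abs_sum_le_sum_abs _ _
    _ ≤ ∑ _a : A, K := by
        refine Finset.sum_le_sum fun a _ => ?_
        rw [abs_mul]
        have h1 : |π x a| ≤ 1 := abs_le.2 ⟨by linarith [hπ.1 x a], policy_le_one hπ x a⟩
        calc |φ x a| * |π x a| ≤ K * 1 := mul_le_mul (hbd x a) h1 (abs_nonneg _) hK
          _ = K := mul_one K
    _ = (Fintype.card A : ℝ) * K := by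
        simp [Finset.sum_const, nsmul_eq_mul, Finset.card_univ]

lemma measurable_Mfun (hrm : ∀ a, Measurable fun x => r x a)
    (hcm : ∀ a i, Measurable fun x => c x a i) (lam C : Fin d → ℝ) :
    Measurable (Mfun r c lam C) := by
  have : Mfun r c lam C = Finset.univ.sup' Finset.univ_nonempty
      (fun a => fun x => r x a - ∑ i, (c x a i - C i) * lam i) := by
    funext x
    rw [Finset.sup'_apply]
    rfl
  rw [this]
  exact Finset.measurable_sup' _ fun a _ =>
    (hrm a).sub (Finset.measurable_sum _ fun i _ =>
      ((hcm a i).sub measurable_const).mul measurable_const)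

lemma abs_Mfun_le (hr : ∀ x a, r x a ∈ Set.Icc (0:ℝ) 1)
    (hc : ∀ x a i, c x a i ∈ Set.Icc (-1:ℝ) 1) (lam C : Fin d → ℝ) (x : X) :
    |Mfun r c lam C x| ≤ 1 + ∑ i, (1 + |C i|) * |lam i| := by
  have key : ∀ a, |r x a - ∑ i, (c x a i - C i) * lam i| ≤ 1 + ∑ i, (1 + |C i|) * |lam i| := by
    intro a
    have h1 : |r x a| ≤ 1 := abs_le.2 ⟨by linarith [(hr x a).1], (hr x a).2⟩
    have h2 : |∑ i, (c x a i - C i) * lam i| ≤ ∑ i, (1 + |C i|) * |lam i| := by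
      calc |∑ i, (c x a i - C i) * lam i| ≤ ∑ i, |(c x a i - C i) * lam i| :=
            Finset.abs_sum_le_sum_abs _ _
        _ ≤ ∑ i, (1 + |C i|) * |lam i| := by
            refine Finset.sum_le_sum fun i _ => ?_
            rw [abs_mul]
            refine mul_le_mul_of_nonneg_right ?_ (abs_nonneg _)
            calc |c x a i - C i| ≤ |c x a i| + |C i| := abs_sub _ _
              _ ≤ 1 + |C i| := by
                  have := abs_le.2 ⟨(hc x a i).1, (hc x a i).2⟩
                  linarith
    calc |r x a - ∑ i, (c x a i - C i) * lam i|
        ≤ |r x a| + |∑ i, (c x a i - C i) * lam i| := abs_sub _ _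
      _ ≤ 1 + ∑ i, (1 + |C i|) * |lam i| := add_le_add h1 h2
  rw [abs_le]
  constructor
  · have a0 := Classical.arbitrary A
    have h := Finset.le_sup' (b := a0)
      (f := fun a => r x a - ∑ i, (c x a i - C i) * lam i) (Finset.mem_univ a0)
    have := (abs_le.1 (key a0)).1
    unfold Mfun
    linarith
  · exact Finset.sup'_le _ _ fun a _ => (abs_le.1 (key a)).2

lemma integrable_Mfun (hr : ∀ x a, r x a ∈ Set.Icc (0:ℝ) 1)
    (hc : ∀ x a i, c x a i ∈ Set.Icc (-1:ℝ) 1)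
    (hrm : ∀ a, Measurable fun x => r x a)
    (hcm : ∀ a i, Measurable fun x => c x a i) (lam C : Fin d → ℝ) :
    Integrable (Mfun r c lam C) ν :=
  integrable_of_bdd (measurable_Mfun hrm hcm lam C) (abs_Mfun_le hr hc lam C)

/-- Pointwise rearrangement: Lagrangian of a policy as a policy-average. -/
lemma pointwise_lagrangian_eq {π : X → A → ℝ} (hπ : IsPolicy π) (lam C : Fin d → ℝ) (x : X) :
    ∑ a, r x a * π x a - ∑ i, lam i * (∑ a, c x a i * π x a - C i)
      = ∑ a, (r x a - ∑ i, (c x a i - C i) * lam i) * π x a := by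
  have hsum := hπ.2.1 x
  have h2 : ∀ i, ∑ a, ((c x a i - C i) * lam i) * π x a
      = lam i * (∑ a, c x a i * π x a - C i) := by
    intro i
    have : ∑ a, ((c x a i - C i) * lam i) * π x a
        = (∑ a, c x a i * π x a) * lam i - (C i * lam i) * ∑ a, π x a := by
      rw [Finset.sum_mul, Finset.mul_sum, ← Finset.sum_sub_distrib]
      exact Finset.sum_congr rfl fun a _ => by ring
    rw [this, hsum]
    ring
  calc ∑ a, r x a * π x a - ∑ i, lam i * (∑ a, c x a i * π x a - C i)
      = ∑ a, r x a * π x a - ∑ i, ∑ a, ((c x a i - C i) * lam i) * π x a := by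
        rw [Finset.sum_congr rfl fun i _ => (h2 i)]
    _ = ∑ a, r x a * π x a - ∑ a, ∑ i, ((c x a i - C i) * lam i) * π x a := by
        rw [Finset.sum_comm]
    _ = ∑ a, (r x a - ∑ i, (c x a i - C i) * lam i) * π x a := by
        rw [← Finset.sum_sub_distrib]
        exact Finset.sum_congr rfl fun a _ => by rw [sub_mul, Finset.sum_mul]

/-- The integral form of the Lagrangian of a policy. -/
lemma lagrangian_integral {π : X → A → ℝ} (hπ : IsPolicy π)
    (hr : ∀ x a, r x a ∈ Set.Icc (0:ℝ) 1)
    (hc : ∀ x a i, c x a i ∈ Set.Icc (-1:ℝ) 1)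
    (hrm : ∀ a, Measurable fun x => r x a)
    (hcm : ∀ a i, Measurable fun x => c x a i) (lam C : Fin d → ℝ) :
    ∫ x, (∑ a, r x a * π x a - ∑ i, lam i * (∑ a, c x a i * π x a - C i)) ∂ν
      = polReward ν r π - ∑ i, lam i * (polCost ν c π i - C i) := by
  have hr1 : ∀ x a, |r x a| ≤ 1 := fun x a =>
    abs_le.2 ⟨by linarith [(hr x a).1], (hr x a).2⟩
  have hc1 : ∀ x a i, |c x a i| ≤ 1 := fun x a i => abs_le.2 ⟨(hc x a i).1, (hc x a i).2⟩
  have hR : Integrable (fun x => ∑ a, r x a * π x a) ν :=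
    integrable_polPair hπ hrm (fun x a => hr1 x a)
  have hCi : ∀ i, Integrable (fun x => ∑ a, c x a i * π x a) ν :=
    fun i => integrable_polPair hπ (fun a => hcm a i) (fun x a => hc1 x a i)
  have hG : ∀ i ∈ Finset.univ, Integrable
      (fun x => lam i * (∑ a, c x a i * π x a - C i)) ν :=
    fun i _ => ((hCi i).sub (integrable_const _)).const_mul _
  rw [integral_sub hR (integrable_finset_sum _ hG), integral_finset_sum _ hG]
  unfold polReward polCost
  congr 1
  refine Finset.sum_congr rfl fun i _ => ?_
  rw [integral_const_mul, integral_sub (hCi i) (integrable_const _), integral_const]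
  simp


lemma pointwise_lagrangian_le {π : X → A → ℝ} (hπ : IsPolicy π) (lam C : Fin d → ℝ) (x : X) :
    ∑ a, r x a * π x a - ∑ i, lam i * (∑ a, c x a i * π x a - C i) ≤ Mfun r c lam C x := by
  rw [pointwise_lagrangian_eq hπ lam C x]
  calc ∑ a, (r x a - ∑ i, (c x a i - C i) * lam i) * π x a
      ≤ ∑ a, Mfun r c lam C x * π x a := by
        refine Finset.sum_le_sum fun a _ => ?_
        exact mul_le_mul_of_nonneg_right
          (Finset.le_sup' (f := fun a => r x a - ∑ i, (c x a i - C i) * lam i)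
            (Finset.mem_univ a)) (hπ.1 x a)
    _ = Mfun r c lam C x := by rw [← Finset.mul_sum, hπ.2.1 x, mul_one]

lemma lagrangian_le_L {π : X → A → ℝ} (hπ : IsPolicy π)
    (hr : ∀ x a, r x a ∈ Set.Icc (0:ℝ) 1)
    (hc : ∀ x a i, c x a i ∈ Set.Icc (-1:ℝ) 1)
    (hrm : ∀ a, Measurable fun x => r x a)
    (hcm : ∀ a i, Measurable fun x => c x a i) (lam C : Fin d → ℝ) :
    polReward ν r π - ∑ i, lam i * (polCost ν c π i - C i) ≤ L ν r c lam C := by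
  rw [← lagrangian_integral hπ hr hc hrm hcm lam C, L_eq]
  have hr1 : ∀ x a, |r x a| ≤ 1 := fun x a =>
    abs_le.2 ⟨by linarith [(hr x a).1], (hr x a).2⟩
  have hc1 : ∀ x a i, |c x a i| ≤ 1 := fun x a i => abs_le.2 ⟨(hc x a i).1, (hc x a i).2⟩
  have hR : Integrable (fun x => ∑ a, r x a * π x a) ν := integrable_polPair hπ hrm hr1
  have hCi : ∀ i, Integrable (fun x => ∑ a, c x a i * π x a) ν :=
    fun i => integrable_polPair hπ (fun a => hcm a i) (fun x a => hc1 x a i)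
  refine integral_mono ?_ (integrable_Mfun hr hc hrm hcm lam C)
    (fun x => pointwise_lagrangian_le hπ lam C x)
  exact hR.sub (integrable_finset_sum _ fun i _ =>
    ((hCi i).sub (integrable_const _)).const_mul _)

lemma weak_duality {π : X → A → ℝ} (hπ : IsPolicy π)
    (hr : ∀ x a, r x a ∈ Set.Icc (0:ℝ) 1)
    (hc : ∀ x a i, c x a i ∈ Set.Icc (-1:ℝ) 1)
    (hrm : ∀ a, Measurable fun x => r x a)
    (hcm : ∀ a i, Measurable fun x => c x a i) {lam C : Fin d → ℝ}
    (hlam : ∀ i, 0 ≤ lam i) (hfeas : ∀ i, polCost ν c π i ≤ C i) :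
    polReward ν r π ≤ L ν r c lam C := by
  have h1 := lagrangian_le_L (ν := ν) hπ hr hc hrm hcm lam C
  have h2 : ∑ i, lam i * (polCost ν c π i - C i) ≤ 0 :=
    Finset.sum_nonpos fun i _ =>
      mul_nonpos_of_nonneg_of_nonpos (hlam i) (sub_nonpos.2 (hfeas i))
  linarith

/-- There is a (measurable argmax) policy achieving the Lagrangian value `L(λ,C)`. -/
lemma exists_argmax_policy
    (hr : ∀ x a, r x a ∈ Set.Icc (0:ℝ) 1)
    (hc : ∀ x a i, c x a i ∈ Set.Icc (-1:ℝ) 1)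
    (hrm : ∀ a, Measurable fun x => r x a)
    (hcm : ∀ a i, Measurable fun x => c x a i) (lam C : Fin d → ℝ) :
    ∃ π : X → A → ℝ, IsPolicy π ∧
      polReward ν r π - ∑ i, lam i * (polCost ν c π i - C i) = L ν r c lam C := by
  classical
  set φ : X → A → ℝ := fun x a => r x a - ∑ i, (c x a i - C i) * lam i with hφ
  have hφm : ∀ a, Measurable fun x => φ x a := fun a =>
    (hrm a).sub (Finset.measurable_sum _ fun i _ =>
      ((hcm a i).sub measurable_const).mul measurable_const)
  set e : A ≃ Fin (Fintype.card A) := Fintype.equivFin A with he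
  have hex : ∀ x, ∃ a, φ x a = Mfun r c lam C x ∧
      ∀ b, φ x b = Mfun r c lam C x → e b ≤ e a := by
    intro x
    have hne : (Finset.univ.filter fun a => φ x a = Mfun r c lam C x).Nonempty := by
      obtain ⟨a, ha, hval⟩ := Finset.exists_mem_eq_sup' (Finset.univ_nonempty (α := A))
        (fun a => φ x a)
      exact ⟨a, Finset.mem_filter.2 ⟨ha, hval.symm⟩⟩
    obtain ⟨a0, ha0, hmax⟩ := Finset.exists_max_image _ e hne
    refine ⟨a0, (Finset.mem_filter.1 ha0).2, fun b hb => ?_⟩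
    exact hmax b (Finset.mem_filter.2 ⟨Finset.mem_univ b, hb⟩)
  set astar : X → A := fun x => Classical.choose (hex x) with hastar
  have hspec : ∀ x, φ x (astar x) = Mfun r c lam C x ∧
      ∀ b, φ x b = Mfun r c lam C x → e b ≤ e (astar x) :=
    fun x => Classical.choose_spec (hex x)
  set π : X → A → ℝ := fun x a => if a = astar x then 1 else 0 with hπdef
  have hsets : ∀ a, MeasurableSet {x | astar x = a} := by
    intro a
    have hMm : Measurable (Mfun r c lam C) := measurable_Mfun hrm hcm lam C
    have hkey : {x | astar x = a} = {x | φ x a = Mfun r c lam C x} ∩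
        ⋂ b, {x | φ x b = Mfun r c lam C x → e b ≤ e a} := by
      ext x
      simp only [Set.mem_setOf_eq, Set.mem_inter_iff, Set.mem_iInter]
      constructor
      · rintro rfl
        exact ⟨(hspec x).1, fun b hb => (hspec x).2 b hb⟩
      · rintro ⟨h1, h2⟩
        have hle : e (astar x) ≤ e a := h2 _ (hspec x).1
        have hge : e a ≤ e (astar x) := (hspec x).2 a h1
        exact e.injective (le_antisymm hle hge)
    rw [hkey]
    refine (measurableSet_eq_fun (hφm a) hMm).inter (MeasurableSet.iInter fun b => ?_)
    by_cases hba : e b ≤ e a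
    · have : {x | φ x b = Mfun r c lam C x → e b ≤ e a} = Set.univ := by
        ext x; simp [hba]
      rw [this]; exact MeasurableSet.univ
    · have : {x | φ x b = Mfun r c lam C x → e b ≤ e a}
          = {x | φ x b = Mfun r c lam C x}ᶜ := by
        ext x; simp [hba]
      rw [this]; exact (measurableSet_eq_fun (hφm b) hMm).compl
  have hπ : IsPolicy π := by
    refine ⟨fun x a => ?_, fun x => ?_, fun a => ?_⟩
    · by_cases h : a = astar x <;> simp [hπdef, h]
    · simp [hπdef]
    · have : (fun x => π x a) = fun x => if astar x = a then (1:ℝ) else 0 := by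
        funext x
        show (if a = astar x then (1:ℝ) else 0) = _
        by_cases h : a = astar x
        · rw [if_pos h, if_pos h.symm]
        · rw [if_neg h, if_neg (fun hh => h hh.symm)]
      rw [this]
      exact Measurable.ite (hsets a) measurable_const measurable_const
  refine ⟨π, hπ, ?_⟩
  rw [← lagrangian_integral hπ hr hc hrm hcm lam C, L_eq]
  refine integral_congr_ae (Filter.Eventually.of_forall fun x => ?_)
  show ∑ a, r x a * π x a - ∑ i, lam i * (∑ a, c x a i * π x a - C i) = Mfun r c lam C x
  rw [pointwise_lagrangian_eq hπ lam C x]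
  have : ∑ a, (r x a - ∑ i, (c x a i - C i) * lam i) * π x a = φ x (astar x) := by
    simp only [hπdef, mul_ite, mul_one, mul_zero]
    rw [Finset.sum_ite_eq' Finset.univ (astar x) (fun a => φ x a)]
    simp
  rw [this, (hspec x).1]

/-- Shifting the budget down by `b·1` shifts `L` by `b‖λ‖₁`. -/
lemma L_shift (hr : ∀ x a, r x a ∈ Set.Icc (0:ℝ) 1)
    (hc : ∀ x a i, c x a i ∈ Set.Icc (-1:ℝ) 1)
    (hrm : ∀ a, Measurable fun x => r x a)
    (hcm : ∀ a i, Measurable fun x => c x a i) (lam B : Fin d → ℝ) (b : ℝ) :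
    L ν r c lam (fun i => B i - b) = L ν r c lam B - b * ∑ i, lam i := by
  have hpt : ∀ x, Mfun r c lam (fun i => B i - b) x
      = Mfun r c lam B x - b * ∑ i, lam i := by
    intro x
    unfold Mfun
    have h1 : ∀ a : A, r x a - ∑ i, (c x a i - (B i - b)) * lam i
        = (r x a - ∑ i, (c x a i - B i) * lam i) - b * ∑ i, lam i := by
      intro a
      have : ∑ i, (c x a i - (B i - b)) * lam i
          = ∑ i, (c x a i - B i) * lam i + b * ∑ i, lam i := by
        rw [Finset.mul_sum, ← Finset.sum_add_distrib]
        exact Finset.sum_congr rfl fun i _ => by ring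
      rw [this]; ring
    rw [Finset.sup'_congr Finset.univ_nonempty rfl (fun a _ => h1 a)]
    exact (Finset.comp_sup'_eq_sup'_comp Finset.univ_nonempty
      (fun t => t - b * ∑ i, lam i) (fun p q => (max_sub_sub_right p q _).symm)).symm
  rw [L_eq, L_eq]
  calc ∫ x, Mfun r c lam (fun i => B i - b) x ∂ν
      = ∫ x, (Mfun r c lam B x - b * ∑ i, lam i) ∂ν := by
        exact integral_congr_ae (Filter.Eventually.of_forall hpt)
    _ = (∫ x, Mfun r c lam B x ∂ν) - b * ∑ i, lam i := by
        rw [integral_sub (integrable_Mfun hr hc hrm hcm lam B) (integrable_const _),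
          integral_const]
        simp

lemma polReward_le_one (hr : ∀ x a, r x a ∈ Set.Icc (0:ℝ) 1)
    (hrm : ∀ a, Measurable fun x => r x a) {π : X → A → ℝ} (hπ : IsPolicy π) :
    polReward ν r π ≤ 1 := by
  have hr1 : ∀ x a, |r x a| ≤ 1 := fun x a =>
    abs_le.2 ⟨by linarith [(hr x a).1], (hr x a).2⟩
  have hpt : ∀ x, ∑ a, r x a * π x a ≤ 1 := by
    intro x
    calc ∑ a, r x a * π x a ≤ ∑ a, 1 * π x a := by
          refine Finset.sum_le_sum fun a _ => ?_
          exact mul_le_mul_of_nonneg_right (hr x a).2 (hπ.1 x a)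
      _ = 1 := by rw [← Finset.mul_sum]; simp [hπ.2.1 x]
  calc polReward ν r π ≤ ∫ _x, (1:ℝ) ∂ν :=
        integral_mono (integrable_polPair hπ hrm hr1) (integrable_const 1) hpt
    _ = 1 := by simp

lemma opt_bddAbove (hr : ∀ x a, r x a ∈ Set.Icc (0:ℝ) 1)
    (hrm : ∀ a, Measurable fun x => r x a) (C : Fin d → ℝ) :
    BddAbove {y : ℝ | ∃ π, IsPolicy π ∧ (∀ i, polCost ν c π i ≤ C i)
      ∧ y = polReward ν r π} := by
  refine ⟨1, fun y hy => ?_⟩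
  obtain ⟨π, hπ, -, rfl⟩ := hy
  exact polReward_le_one hr hrm hπ


lemma dual_le_OPT
    (hr : ∀ x a, r x a ∈ Set.Icc (0:ℝ) 1)
    (hc : ∀ x a i, c x a i ∈ Set.Icc (-1:ℝ) 1)
    (hrm : ∀ a, Measurable fun x => r x a)
    (hcm : ∀ a i, Measurable fun x => c x a i)
    {B : Fin d → ℝ} {b : ℝ} (hb0 : 0 < b)
    (hfeas : ∃ B' : Fin d → ℝ, (∀ i, B' i < B i - b) ∧ Feasible ν c B')
    {lamstar : Fin d → ℝ} (hls0 : ∀ i, 0 ≤ lamstar i)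
    (hmin : ∀ lam : Fin d → ℝ, (∀ i, 0 ≤ lam i) → L ν r c lamstar B ≤ L ν r c lam B) :
    L ν r c lamstar B ≤ OPT ν r c B := by
  classical
  have hr1 : ∀ x a, |r x a| ≤ 1 := fun x a =>
    abs_le.2 ⟨by linarith [(hr x a).1], (hr x a).2⟩
  have hc1 : ∀ x a i, |c x a i| ≤ 1 := fun x a i => abs_le.2 ⟨(hc x a i).1, (hc x a i).2⟩
  set V : ℝ := OPT ν r c B with hV
  set S : Set ((Fin d → ℝ) × ℝ) :=
    {p | ∃ π, IsPolicy π ∧ (∀ i, polCost ν c π i = p.1 i) ∧ polReward ν r π = p.2} with hSdef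
  set D : Set ((Fin d → ℝ) × ℝ) := {p | (∀ i, p.1 i < B i) ∧ V < p.2} with hDdef
  -- Convexity of S
  have hSconv : Convex ℝ S := by
    rintro p ⟨π₁, hπ₁, hcost₁, hrew₁⟩ q ⟨π₂, hπ₂, hcost₂, hrew₂⟩ θ η hθ hη hθη
    refine ⟨fun x a => θ * π₁ x a + η * π₂ x a, ⟨?_, ?_, ?_⟩, ?_, ?_⟩
    · exact fun x a => add_nonneg (mul_nonneg hθ (hπ₁.1 x a)) (mul_nonneg hη (hπ₂.1 x a))
    · intro x
      rw [Finset.sum_add_distrib, ← Finset.mul_sum, ← Finset.mul_sum, hπ₁.2.1 x, hπ₂.2.1 x]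
      simpa using hθη
    · exact fun a => (measurable_const.mul (hπ₁.2.2 a)).add (measurable_const.mul (hπ₂.2.2 a))
    · intro i
      have key : (fun x => ∑ a, c x a i * (θ * π₁ x a + η * π₂ x a))
          = fun x => θ * (∑ a, c x a i * π₁ x a) + η * (∑ a, c x a i * π₂ x a) := by
        funext x
        rw [Finset.mul_sum, Finset.mul_sum, ← Finset.sum_add_distrib]
        exact Finset.sum_congr rfl fun a _ => by ring
      show polCost ν c _ i = (θ • p + η • q).1 i
      unfold polCost
      rw [key, integral_add ((integrable_polPair hπ₁ (fun a => hcm a i)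
          (fun x a => hc1 x a i)).const_mul θ) ((integrable_polPair hπ₂ (fun a => hcm a i)
          (fun x a => hc1 x a i)).const_mul η), integral_const_mul, integral_const_mul]
      have : (θ • p + η • q).1 i = θ * p.1 i + η * q.1 i := by
        simp [Prod.smul_fst, smul_eq_mul]
      rw [this, ← hcost₁ i, ← hcost₂ i]
      rfl
    · have key : (fun x => ∑ a, r x a * (θ * π₁ x a + η * π₂ x a))
          = fun x => θ * (∑ a, r x a * π₁ x a) + η * (∑ a, r x a * π₂ x a) := by
        funext x
        rw [Finset.mul_sum, Finset.mul_sum, ← Finset.sum_add_distrib]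
        exact Finset.sum_congr rfl fun a _ => by ring
      show polReward ν r _ = (θ • p + η • q).2
      unfold polReward
      rw [key, integral_add ((integrable_polPair hπ₁ hrm hr1).const_mul θ)
        ((integrable_polPair hπ₂ hrm hr1).const_mul η), integral_const_mul, integral_const_mul]
      have : (θ • p + η • q).2 = θ * p.2 + η * q.2 := by
        simp [smul_eq_mul]
      rw [this, ← hrew₁, ← hrew₂]
      rfl
  -- D is open and convex
  have hDopen : IsOpen D := by
    have : D = (⋂ i, {p : (Fin d → ℝ) × ℝ | p.1 i < B i}) ∩ {p | V < p.2} := by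
      ext p; simp [hDdef, Set.mem_iInter]
    rw [this]
    refine IsOpen.inter (isOpen_iInter_of_finite fun i => ?_)
      (isOpen_lt continuous_const continuous_snd)
    exact isOpen_lt ((continuous_apply i).comp continuous_fst) continuous_const
  have hDconv : Convex ℝ D := by
    have h1 : ∀ i : Fin d, Convex ℝ {p : (Fin d → ℝ) × ℝ | p.1 i < B i} := fun i =>
      convex_halfSpace_lt (⟨fun p q => rfl, fun t p => rfl⟩ :
        IsLinearMap ℝ fun p : (Fin d → ℝ) × ℝ => p.1 i) _
    have h2 : Convex ℝ {p : (Fin d → ℝ) × ℝ | V < p.2} :=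
      convex_halfSpace_gt (⟨fun p q => rfl, fun t p => rfl⟩ :
        IsLinearMap ℝ fun p : (Fin d → ℝ) × ℝ => p.2) _
    have : D = (⋂ i, {p : (Fin d → ℝ) × ℝ | p.1 i < B i}) ∩ {p | V < p.2} := by
      ext p; simp [hDdef, Set.mem_iInter]
    rw [this]
    exact (convex_iInter h1).inter h2
  -- Disjointness
  have hdisj : Disjoint D S := by
    rw [Set.disjoint_left]
    rintro p ⟨hp1, hp2⟩ ⟨π, hπ, hcost, hrew⟩
    have hmem : polReward ν r π ∈ {y : ℝ | ∃ π', IsPolicy π' ∧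
        (∀ i, polCost ν c π' i ≤ B i) ∧ y = polReward ν r π'} :=
      ⟨π, hπ, fun i => by rw [hcost i]; exact (hp1 i).le, rfl⟩
    have hle : polReward ν r π ≤ OPT ν r c B := by
      unfold OPT
      exact le_csSup (opt_bddAbove hr hrm B) hmem
    rw [hrew] at hle
    rw [hV] at hp2
    linarith
  obtain ⟨f, cv, hfD, hfS⟩ := geometric_hahn_banach_open hDconv hDopen hSconv hdisj
  set mu : Fin d → ℝ := fun i => f (Pi.single i 1, 0) with hmudef
  set tt : ℝ := f (0, 1) with httdef
  have hrep : ∀ p : (Fin d → ℝ) × ℝ, f p = ∑ i, mu i * p.1 i + tt * p.2 := by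
    intro p
    have hsplit : f p = f (p.1, 0) + f ((0 : Fin d → ℝ), p.2) := by
      rw [← map_add]
      congr 1
      exact Prod.ext (by simp) (by simp)
    have h2 : f ((0 : Fin d → ℝ), p.2) = tt * p.2 := by
      have : ((0 : Fin d → ℝ), p.2) = p.2 • ((0 : Fin d → ℝ), (1:ℝ)) :=
        Prod.ext (by simp) (by simp)
      rw [this, f.map_smul, smul_eq_mul, httdef, mul_comm]
    have h1 : ((p.1 : Fin d → ℝ), (0:ℝ)) = ∑ i, p.1 i • ((Pi.single i 1 : Fin d → ℝ), (0:ℝ)) := by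
      refine Prod.ext ?_ ?_
      · rw [Prod.fst_sum]
        have : ∀ i, p.1 i • (Pi.single i 1 : Fin d → ℝ) = Pi.single i (p.1 i) := by
          intro i
          funext j
          simp [Pi.single_apply, smul_eq_mul, mul_ite]
        simp only [Prod.smul_fst, this]
        exact (Finset.univ_sum_single p.1).symm
      · rw [Prod.snd_sum]
        simp
    have h3 : f (p.1, 0) = ∑ i, mu i * p.1 i := by
      rw [h1, map_sum]
      exact Finset.sum_congr rfl fun i _ => by rw [f.map_smul, smul_eq_mul, mul_comm]
    rw [hsplit, h2, h3]
  -- μ ≥ 0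
  have hmu0 : ∀ j, 0 ≤ mu j := by
    intro j
    by_contra hneg
    push_neg at hneg
    have hfd : ∀ s : ℝ, 0 ≤ s →
        ((fun i => B i - 1 - (if i = j then s else 0)), V + 1) ∈ D := by
      intro s hs
      refine ⟨fun i => ?_, by show V < V + 1; linarith⟩
      show B i - 1 - (if i = j then s else 0) < B i
      by_cases h : i = j
      · rw [if_pos h]; linarith
      · rw [if_neg h]; linarith
    have hval : ∀ s : ℝ, f ((fun i => B i - 1 - (if i = j then s else 0)), V + 1)
        = (∑ i, mu i * (B i - 1) + tt * (V + 1)) - mu j * s := by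
      intro s
      rw [hrep]
      have h2 : ∑ i, mu i * (B i - 1 - (if i = j then s else 0))
          = ∑ i, mu i * (B i - 1) - mu j * s := by
        have : ∀ i, mu i * (B i - 1 - (if i = j then s else 0))
            = mu i * (B i - 1) - (if i = j then mu i * s else 0) := by
          intro i; by_cases h : i = j <;> simp [h] <;> ring
        rw [Finset.sum_congr rfl fun i _ => this i, Finset.sum_sub_distrib,
          Finset.sum_ite_eq' Finset.univ j (fun i => mu i * s)]
        simp
      rw [h2]; ring
    set Kb : ℝ := ∑ i, mu i * (B i - 1) + tt * (V + 1) with hKb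
    have h0 : Kb < cv := by
      have := hfD _ (hfd 0 le_rfl)
      rw [hval 0] at this
      simpa using this
    set s0 : ℝ := (cv - Kb) / (-mu j) with hs0def
    have hs0 : 0 ≤ s0 := le_of_lt (div_pos (by linarith) (by linarith))
    have hcontra := hfD _ (hfd s0 hs0)
    rw [hval s0] at hcontra
    have heq : mu j * s0 = -(cv - Kb) := by
      have h' : s0 * -mu j = cv - Kb := div_mul_cancel₀ _ (by linarith)
      linear_combination -h'
    rw [heq] at hcontra
    linarith
  -- t ≤ 0
  have htt0 : tt ≤ 0 := by
    by_contra hpos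
    push_neg at hpos
    set Kb : ℝ := ∑ i, mu i * (B i - 1) with hKb
    have hfd : ∀ s : ℝ, 0 < s → ((fun i => B i - 1), V + s) ∈ D :=
      fun s hs => ⟨fun i => by show B i - 1 < B i; linarith, by show V < V + s; linarith⟩
    have hval : ∀ s : ℝ, f ((fun i => B i - 1), V + s) = Kb + tt * (V + s) :=
      fun s => by rw [hrep]
    set s0 : ℝ := max 1 ((cv - Kb - tt * V) / tt) with hs0def
    have hs0 : 0 < s0 := lt_of_lt_of_le one_pos (le_max_left _ _)
    have h1 := hfD _ (hfd s0 hs0)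
    rw [hval s0, mul_add] at h1
    have h2 : (cv - Kb - tt * V) / tt ≤ s0 := le_max_right _ _
    rw [div_le_iff₀ hpos] at h2
    nlinarith
  -- boundary inequality
  have hmusum : 0 ≤ ∑ i, mu i := Finset.sum_nonneg fun i _ => hmu0 i
  have hbdry : ∑ i, mu i * B i + tt * V ≤ cv := by
    have hstep : ∀ δ : ℝ, 0 < δ →
        ∑ i, mu i * B i + tt * V < cv + δ * (∑ i, mu i - tt) := by
      intro δ hδ
      have hmem : ((fun i => B i - δ), V + δ) ∈ D :=
        ⟨fun i => by show B i - δ < B i; linarith, by show V < V + δ; linarith⟩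
      have h1' := hfD _ hmem
      rw [hrep] at h1'
      have h1 : ∑ i, mu i * (B i - δ) + tt * (V + δ) < cv := h1'
      have h2 : ∑ i, mu i * (B i - δ) = ∑ i, mu i * B i - δ * ∑ i, mu i := by
        rw [Finset.mul_sum, ← Finset.sum_sub_distrib]
        exact Finset.sum_congr rfl fun i _ => by ring
      rw [h2] at h1
      nlinarith
    refine le_of_forall_pos_lt_add fun ε hε => ?_
    have hk : 0 ≤ ∑ i, mu i - tt := by linarith
    have hδ : 0 < ε / (∑ i, mu i - tt + 1) := div_pos hε (by linarith)
    have hs := hstep _ hδ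
    have hlt : (ε / (∑ i, mu i - tt + 1)) * (∑ i, mu i - tt) < ε := by
      rw [div_mul_eq_mul_div, div_lt_iff₀ (by linarith)]
      nlinarith
    linarith
  -- Slater point
  obtain ⟨B', hB', π₀, hπ₀, hcost₀⟩ := hfeas
  have hp₀ : ((fun i => polCost ν c π₀ i), polReward ν r π₀) ∈ S :=
    ⟨π₀, hπ₀, fun i => rfl, rfl⟩
  have hfS₀' := hfS _ hp₀
  rw [hrep] at hfS₀'
  have hfS₀ : cv ≤ ∑ i, mu i * polCost ν c π₀ i + tt * polReward ν r π₀ := hfS₀'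
  rcases lt_or_eq_of_le htt0 with htneg | hteq
  · -- t < 0 : build the dual multiplier
    set lamh : Fin d → ℝ := fun i => mu i / (-tt) with hlamhdef
    have hlamh0 : ∀ i, 0 ≤ lamh i := fun i => div_nonneg (hmu0 i) (by linarith)
    obtain ⟨πh, hπh, hLh⟩ := exists_argmax_policy (ν := ν) hr hc hrm hcm lamh B
    have hph : ((fun i => polCost ν c πh i), polReward ν r πh) ∈ S :=
      ⟨πh, hπh, fun i => rfl, rfl⟩
    have hfSh' := hfS _ hph
    rw [hrep] at hfSh'
    have hfSh : cv ≤ ∑ i, mu i * polCost ν c πh i + tt * polReward ν r πh := hfSh'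
    have hkey : polReward ν r πh - ∑ i, lamh i * (polCost ν c πh i - B i) ≤ V := by
      have hpos : 0 < -tt := by linarith
      rw [← mul_le_mul_iff_right₀ hpos]
      have hexp : (-tt) * (polReward ν r πh - ∑ i, lamh i * (polCost ν c πh i - B i))
          = (-tt) * polReward ν r πh
            - (∑ i, mu i * polCost ν c πh i - ∑ i, mu i * B i) := by
        rw [mul_sub, Finset.mul_sum]
        have : ∀ i, (-tt) * (lamh i * (polCost ν c πh i - B i))
            = mu i * polCost ν c πh i - mu i * B i := by
          intro i
          rw [hlamhdef]
          have hne : tt ≠ 0 := by linarith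
          field_simp
        rw [Finset.sum_congr rfl fun i _ => this i, Finset.sum_sub_distrib]
      rw [hexp]
      linarith
    calc L ν r c lamstar B ≤ L ν r c lamh B := hmin lamh hlamh0
      _ = polReward ν r πh - ∑ i, lamh i * (polCost ν c πh i - B i) := hLh.symm
      _ ≤ V := hkey
  · -- t = 0 : contradiction with the Slater point
    exfalso
    have hμB : ∑ i, mu i * B i ≤ cv := by rw [hteq] at hbdry; simpa using hbdry
    have h1 : ∑ i, mu i * (B i - polCost ν c π₀ i) ≤ 0 := by
      have hexp : ∑ i, mu i * (B i - polCost ν c π₀ i)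
          = ∑ i, mu i * B i - ∑ i, mu i * polCost ν c π₀ i := by
        rw [← Finset.sum_sub_distrib]
        exact Finset.sum_congr rfl fun i _ => by ring
      have hfS₀'' : cv ≤ ∑ i, mu i * polCost ν c π₀ i := by
        rw [hteq] at hfS₀
        simpa using hfS₀
      rw [hexp]
      linarith
    have h2 : b * ∑ i, mu i ≤ ∑ i, mu i * (B i - polCost ν c π₀ i) := by
      rw [Finset.mul_sum]
      refine Finset.sum_le_sum fun i _ => ?_
      have hbi : b ≤ B i - polCost ν c π₀ i := by
        have := hB' i; have := hcost₀ i; linarith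
      nlinarith [hmu0 i]
    have hsum0 : ∑ i, mu i = 0 := le_antisymm (by nlinarith) hmusum
    have hmueq : ∀ i ∈ Finset.univ, mu i = 0 :=
      (Finset.sum_eq_zero_iff_of_nonneg fun i _ => hmu0 i).1 hsum0
    have hDpt : ((fun i => B i - 1), V + 1) ∈ D :=
      ⟨fun i => by show B i - 1 < B i; linarith, by show V < V + 1; linarith⟩
    have hcv1' := hfD _ hDpt
    rw [hrep] at hcv1'
    have hcv1 : ∑ i, mu i * (B i - 1) + tt * (V + 1) < cv := hcv1'
    have hz : ∑ i, mu i * (B i - 1) = 0 :=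
      Finset.sum_eq_zero fun i hi => by rw [hmueq i hi, zero_mul]
    have hz2 : ∑ i, mu i * polCost ν c π₀ i = 0 :=
      Finset.sum_eq_zero fun i hi => by rw [hmueq i hi, zero_mul]
    rw [hz, hteq] at hcv1
    rw [hz2, hteq] at hfS₀
    simp only [zero_add, zero_mul, add_zero] at hcv1 hfS₀
    linarith

end WithMeasure

/-- Lower-bound step from Appendix E: if `b ∈ (0, min B)` and the problem is feasible for
some `B' < B − b·1`, then any minimizer `λ*_B` of `λ ↦ L(λ,B)` over `λ ≥ 0` satisfies
`OPT(r,c,B) − OPT(r,c,B−b·1) ≥ b‖λ*_B‖₁ ≥ b‖λ*_B‖`. -/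
theorem opt_gap_lower_bound
    {X : Type*} [MeasurableSpace X] (ν : Measure X) [IsProbabilityMeasure ν]
    {A : Type*} [Fintype A] [Nonempty A] {d : ℕ} (hd : 0 < d)
    (r : X → A → ℝ) (c : X → A → Fin d → ℝ) (B : Fin d → ℝ) (b : ℝ)
    (hr : ∀ x a, r x a ∈ Set.Icc (0 : ℝ) 1)
    (hc : ∀ x a i, c x a i ∈ Set.Icc (-1 : ℝ) 1)
    (hrm : ∀ a, Measurable fun x => r x a)
    (hcm : ∀ a i, Measurable fun x => c x a i)
    (hb0 : 0 < b) (hb : b < minComp B)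
    (hfeas : ∃ B' : Fin d → ℝ, (∀ i, B' i < B i - b) ∧ Feasible ν c B')
    (lamstar : Fin d → ℝ) (hls0 : ∀ i, 0 ≤ lamstar i)
    (hmin : ∀ lam : Fin d → ℝ, (∀ i, 0 ≤ lam i) → L ν r c lamstar B ≤ L ν r c lam B) :
    b * l1norm lamstar ≤ OPT ν r c B - OPT ν r c (fun i => B i - b)
      ∧ b * enorm lamstar ≤ b * l1norm lamstar := by
  obtain ⟨B', hB', π₀, hπ₀, hcost₀⟩ := hfeas
  constructor
  · -- main inequality
    have hLle : L ν r c lamstar B ≤ OPT ν r c B :=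
      dual_le_OPT hr hc hrm hcm hb0 ⟨B', hB', π₀, hπ₀, hcost₀⟩ hls0 hmin
    have hfm : ∀ i, polCost ν c π₀ i ≤ B i - b :=
      fun i => le_of_lt (lt_of_le_of_lt (hcost₀ i) (hB' i))
    have hOPTm : OPT ν r c (fun i => B i - b)
        ≤ L ν r c lamstar B - b * ∑ i, lamstar i := by
      unfold OPT
      refine csSup_le ⟨polReward ν r π₀, π₀, hπ₀, hfm, rfl⟩ ?_
      rintro y ⟨π, hπ, hfeasπ, rfl⟩
      have hwd := weak_duality (ν := ν) hπ hr hc hrm hcm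
        (lam := lamstar) (C := fun i => B i - b) hls0 hfeasπ
      rw [L_shift hr hc hrm hcm lamstar B b] at hwd
      exact hwd
    have hl1 : l1norm lamstar = ∑ i, lamstar i :=
      Finset.sum_congr rfl fun i _ => abs_of_nonneg (hls0 i)
    rw [hl1]
    linarith
  · -- Euclidean vs ℓ1
    refine mul_le_mul_of_nonneg_left ?_ hb0.le
    unfold enorm l1norm
    have h1 : ∑ i, (lamstar i) ^ 2 = ∑ i, |lamstar i| ^ 2 :=
      Finset.sum_congr rfl fun i _ => (sq_abs _).symm
    rw [h1]
    calc Real.sqrt (∑ i, |lamstar i| ^ 2)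
        ≤ Real.sqrt ((∑ i, |lamstar i|) ^ 2) :=
          Real.sqrt_le_sqrt (Finset.sum_sq_le_sq_sum_of_nonneg fun i _ => abs_nonneg _)
      _ = ∑ i, |lamstar i| := Real.sqrt_sq (Finset.sum_nonneg fun i _ => abs_nonneg _)

end CBwK
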